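/- Let W ⊆ V be a subspace and 𝔐 = {Z ∈ V : Ω(U)(Z) = 0 for every k-tuple U ∈ W^k all of whose components lie in W}. If Y ∈ V^k satisfies Ω(Y)(Z) = 0 for all Z ∈ 𝔐, then there exists U ∈ W^k with Ω(Y) = Ω(U), i.e. Y − U ∈ Ker Ω. (Pointwise content of the Lemma: if 𝐘 ∈ 𝔐^⊥ then there exists a vertical k-vector field 𝐕 with 𝐘 − 𝐕 ∈ Ker Ω_𝓛.) -/
import Mathlib


/-- Pointwise content of the Lemma: if `𝐘 ∈ 𝔐^⊥` then there exists a vertical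
k-vector field `𝐕` with `𝐘 − 𝐕 ∈ Ker Ω_𝓛`. Here `W ⊆ V` is a subspace and
`𝔐 = {Z ∈ V : Ω(U)(Z) = 0 for every k-tuple U with components in W}`. -/
theorem stmt3 {k : ℕ} (hk : 1 ≤ k) (V : Type*) [AddCommGroup V] [Module ℝ V]
    [FiniteDimensional ℝ V]
    (ω : Fin k → (V →ₗ[ℝ] V →ₗ[ℝ] ℝ))
    (halt : ∀ α, ∀ z : V, ω α z z = 0)
    (W : Submodule ℝ V)
    (Y : Fin k → V)
    (hY : ∀ Z : V,
      (∀ U : Fin k → V, (∀ α, U α ∈ W) → (∑ α, ω α (U α) Z) = 0) →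
      (∑ α, ω α (Y α) Z) = 0) :
    ∃ U : Fin k → V, (∀ α, U α ∈ W) ∧
      ∀ Z : V, (∑ α, ω α (Y α) Z) = (∑ α, ω α (U α) Z) := by
  classical
  -- the linear map Ω : (Fin k → V) → Dual V
  let L : (Fin k → V) →ₗ[ℝ] Module.Dual ℝ V :=
    { toFun := fun U => ∑ α, ω α (U α)
      map_add' := by intro a b; simp [Finset.sum_add_distrib]
      map_smul' := by intro c a; simp [Finset.smul_sum] }
  -- the image of W^k under Ω
  let S : Submodule ℝ (Module.Dual ℝ V) :=
    (Submodule.pi (Set.univ : Set (Fin k)) (fun _ => W)).map L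
  have hmem : (L Y) ∈ S.dualCoannihilator.dualAnnihilator := by
    rw [Submodule.mem_dualAnnihilator]
    intro Z hZ
    rw [Submodule.mem_dualCoannihilator] at hZ
    have := hY Z (fun U hU => by
      have : L U ∈ S := Submodule.mem_map_of_mem (by
        rw [Submodule.mem_pi]; exact fun i _ => hU i)
      have := hZ _ this
      simpa [L] using this)
    simpa [L] using this
  rw [Subspace.dualCoannihilator_dualAnnihilator_eq] at hmem
  obtain ⟨U, hU, hLU⟩ := hmem
  simp only [SetLike.mem_coe, Submodule.mem_pi] at hU
  refine ⟨U, fun α => hU α trivial, fun Z => ?_⟩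
  have := congrArg (fun f => f Z) hLU
  simpa [L] using this.symm
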